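/- Suppose Assumption (A) holds. Then for every test function f, the means of f under the interior and boundary measures satisfy |μ_V(f) − μ_W^∂(f)| ≤ C₀C₁·( ∫ (f − μ_V(f))² dμ_V )^{1/2} + C₀C₂·( g_V(f) )^{1/2}. -/

import Mathlib

open MeasureTheory Real

noncomputable section

def Hs (d : ℕ) : Set (EuclideanSpace ℝ (Fin (d + 1))) := {x | 0 < x 0}

def iota (d : ℕ) (y : EuclideanSpace ℝ (Fin d)) : EuclideanSpace ℝ (Fin (d + 1)) :=
  WithLp.toLp 2 (Fin.cons 0 (WithLp.ofLp y) : Fin (d + 1) → ℝ)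

def IsTest (d : ℕ) (f : EuclideanSpace ℝ (Fin (d + 1)) → ℝ) : Prop :=
  ContDiff ℝ 1 f ∧ (∃ C, ∀ x, |f x| ≤ C) ∧ ∃ C, ∀ x, ‖gradient f x‖ ≤ C

def IsTestB (d : ℕ) (g : EuclideanSpace ℝ (Fin d) → ℝ) : Prop :=
  ContDiff ℝ 1 g ∧ (∃ C, ∀ y, |g y| ≤ C) ∧ ∃ C, ∀ y, ‖gradient g y‖ ≤ C

def ZV (d : ℕ) (V : EuclideanSpace ℝ (Fin (d + 1)) → ℝ) : ℝ :=
  ∫ x in Hs d, Real.exp (V x)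

def ZW (d : ℕ) (W : EuclideanSpace ℝ (Fin d) → ℝ) : ℝ :=
  ∫ y, Real.exp (W y)

/-- mean of `φ` under `μ_V`. -/
def muV (d : ℕ) (V : EuclideanSpace ℝ (Fin (d + 1)) → ℝ)
    (φ : EuclideanSpace ℝ (Fin (d + 1)) → ℝ) : ℝ :=
  (ZV d V)⁻¹ * ∫ x in Hs d, φ x * Real.exp (V x)

/-- mean of `ψ` under `ν_W`. -/
def nuW (d : ℕ) (W : EuclideanSpace ℝ (Fin d) → ℝ)
    (ψ : EuclideanSpace ℝ (Fin d) → ℝ) : ℝ :=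
  (ZW d W)⁻¹ * ∫ y, ψ y * Real.exp (W y)

def theta (d : ℕ) (V : EuclideanSpace ℝ (Fin (d + 1)) → ℝ)
    (W : EuclideanSpace ℝ (Fin d) → ℝ) (γ : ℝ) : ℝ :=
  γ * ZW d W / (γ * ZW d W + ZV d V)

/-- mean of `φ` under `μ = θ μ_V + (1-θ) μ_W^∂`. -/
def muM (d : ℕ) (V : EuclideanSpace ℝ (Fin (d + 1)) → ℝ)
    (W : EuclideanSpace ℝ (Fin d) → ℝ) (γ : ℝ)
    (φ : EuclideanSpace ℝ (Fin (d + 1)) → ℝ) : ℝ :=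
  theta d V W γ * muV d V φ + (1 - theta d V W γ) * nuW d W (fun y => φ (iota d y))

def gV (d : ℕ) (V f : EuclideanSpace ℝ (Fin (d + 1)) → ℝ) : ℝ :=
  muV d V (fun x => ‖gradient f x‖ ^ 2)

def gW (d : ℕ) (W : EuclideanSpace ℝ (Fin d) → ℝ)
    (f : EuclideanSpace ℝ (Fin (d + 1)) → ℝ) : ℝ :=
  nuW d W (fun y => ‖gradient (fun z => f (iota d z)) y‖ ^ 2)

def Edir (d : ℕ) (V : EuclideanSpace ℝ (Fin (d + 1)) → ℝ)
    (W : EuclideanSpace ℝ (Fin d) → ℝ) (γ δ : ℝ)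
    (f : EuclideanSpace ℝ (Fin (d + 1)) → ℝ) : ℝ :=
  theta d V W γ * gV d V f + (1 - theta d V W γ) * δ * gW d W f

def supNorm (d : ℕ) (f : EuclideanSpace ℝ (Fin (d + 1)) → ℝ) : ℝ := ⨆ x, |f x|

def lap (d : ℕ) (h : EuclideanSpace ℝ (Fin (d + 1)) → ℝ)
    (x : EuclideanSpace ℝ (Fin (d + 1))) : ℝ :=
  ∑ i : Fin (d + 1),
    fderiv ℝ (fun z => fderiv ℝ h z (EuclideanSpace.single i 1)) x (EuclideanSpace.single i 1)

def LV (d : ℕ) (V h : EuclideanSpace ℝ (Fin (d + 1)) → ℝ)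
    (x : EuclideanSpace ℝ (Fin (d + 1))) : ℝ :=
  lap d h x + (inner ℝ (gradient V x) (gradient h x) : ℝ)

def M0 (d : ℕ) (V : EuclideanSpace ℝ (Fin (d + 1)) → ℝ)
    (W : EuclideanSpace ℝ (Fin d) → ℝ) : ℝ :=
  ⨆ y, max (W y - V (iota d y)) 0

def C0 (d : ℕ) (V : EuclideanSpace ℝ (Fin (d + 1)) → ℝ)
    (W : EuclideanSpace ℝ (Fin d) → ℝ) : ℝ :=
  (ZV d V / ZW d W) * Real.exp (M0 d V W)

def C1 (d : ℕ) (V h : EuclideanSpace ℝ (Fin (d + 1)) → ℝ) : ℝ :=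
  Real.sqrt (muV d V (fun x => (max (-(LV d V h x)) 0) ^ 2))

def C2 (d : ℕ) (V h : EuclideanSpace ℝ (Fin (d + 1)) → ℝ) : ℝ :=
  Real.sqrt (muV d V (fun x => ‖gradient h x‖ ^ 2))

/-- Assumption (A). -/
def AssumptionA (d : ℕ) (V : EuclideanSpace ℝ (Fin (d + 1)) → ℝ)
    (W : EuclideanSpace ℝ (Fin d) → ℝ) (h : EuclideanSpace ℝ (Fin (d + 1)) → ℝ) : Prop :=
  ContDiff ℝ 2 h ∧
  (∀ y, fderiv ℝ h (iota d y) (EuclideanSpace.single 0 1) = 1) ∧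
  BddAbove (Set.range fun y => max (W y - V (iota d y)) 0) ∧
  IntegrableOn (fun x => (max (-(LV d V h x)) 0) ^ 2 * Real.exp (V x)) (Hs d) ∧
  IntegrableOn (fun x => ‖gradient h x‖ ^ 2 * Real.exp (V x)) (Hs d) ∧
  ∀ φ : EuclideanSpace ℝ (Fin (d + 1)) → ℝ, (∃ K, LipschitzWith K φ) →
    (∃ C, ∀ x, |φ x| ≤ C) →
    (∫ y, φ (iota d y) * Real.exp (V (iota d y))) =
      - ∫ x in Hs d,
          (φ x * LV d V h x + (inner ℝ (gradient φ x) (gradient h x) : ℝ)) * Real.exp (V x)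

/-- Assumption (B) with given sup constants. -/
def AssumptionB (d : ℕ) (V : EuclideanSpace ℝ (Fin (d + 1)) → ℝ)
    (W : EuclideanSpace ℝ (Fin d) → ℝ) (h : EuclideanSpace ℝ (Fin (d + 1)) → ℝ)
    (Cb1 Cb2 : ℝ) : Prop :=
  ContDiff ℝ 2 h ∧
  (∀ y, fderiv ℝ h (iota d y) (EuclideanSpace.single 0 1) = 1) ∧
  BddAbove (Set.range fun y => max (W y - V (iota d y)) 0) ∧
  IsLUB ((fun x => max (-(LV d V h x)) 0) '' {x : EuclideanSpace ℝ (Fin (d + 1)) | 0 ≤ x 0}) Cb1 ∧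
  IsLUB ((fun x => ‖gradient h x‖) '' {x : EuclideanSpace ℝ (Fin (d + 1)) | 0 ≤ x 0}) Cb2 ∧
  ∀ φ : EuclideanSpace ℝ (Fin (d + 1)) → ℝ, (∃ K, LipschitzWith K φ) →
    (∃ C, ∀ x, |φ x| ≤ C) →
    (∫ y, φ (iota d y) * Real.exp (V (iota d y))) =
      - ∫ x in Hs d,
          (φ x * LV d V h x + (inner ℝ (gradient φ x) (gradient h x) : ℝ)) * Real.exp (V x)


section AuxLemmas

variable {F : Type*} [NormedAddCommGroup F] [InnerProductSpace ℝ F] [CompleteSpace F]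

lemma norm_gradient_eq (f : F → ℝ) (x : F) : ‖gradient f x‖ = ‖fderiv ℝ f x‖ := by
  rw [gradient]; exact LinearIsometryEquiv.norm_map _ _

lemma continuous_gradient {f : F → ℝ} (hf : ContDiff ℝ 1 f) : Continuous (gradient f) :=
  (LinearIsometryEquiv.continuous _).comp (hf.continuous_fderiv one_ne_zero)

lemma measurable_gradient' [MeasurableSpace F] [BorelSpace F] (f : F → ℝ) :
    Measurable (gradient f) :=
  (LinearIsometryEquiv.continuous _).measurable.comp (measurable_fderiv ℝ f)

lemma gradient_sub_const (f : F → ℝ) (c : ℝ) (x : F) :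
    gradient (fun y => f y - c) x = gradient f x := by
  unfold gradient; rw [fderiv_sub_const]

lemma gradient_neg' (f : F → ℝ) (x : F) :
    gradient (fun y => -(f y)) x = -gradient f x := by
  unfold gradient; rw [fderiv_fun_neg, map_neg]

lemma gradient_posPart_le (g : F → ℝ) (hg : ∀ x, DifferentiableAt ℝ g x) (x : F) :
    ‖gradient (fun y => max (g y) 0) x‖ ≤ ‖gradient g x‖ := by
  rcases lt_trichotomy (g x) 0 with h | h | h
  · have he : (fun y => max (g y) 0) =ᶠ[nhds x] (fun _ => (0:ℝ)) := by
      have : ∀ᶠ y in nhds x, g y < 0 := (hg x).continuousAt.eventually_lt continuousAt_const h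
      filter_upwards [this] with y hy using max_eq_right hy.le
    rw [he.gradient_eq, gradient_fun_const]; simp
  · by_cases hd : DifferentiableAt ℝ (fun y => max (g y) 0) x
    · have hmin : IsLocalMin (fun y => max (g y) 0) x := by
        apply Filter.Eventually.of_forall
        intro y; simp [h, le_max_right]
      rw [norm_gradient_eq, hmin.fderiv_eq_zero]; simp
    · rw [gradient_eq_zero_of_not_differentiableAt hd]; simp
  · have he : (fun y => max (g y) 0) =ᶠ[nhds x] g := by
      have : ∀ᶠ y in nhds x, 0 < g y := continuousAt_const.eventually_lt (hg x).continuousAt h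
      filter_upwards [this] with y hy using max_eq_left hy.le
    rw [he.gradient_eq]

/-! bump functions -/

def bump (n : ℕ) (x : F) : ℝ := max (min ((n:ℝ) + 1 - ‖x‖) 1) 0

lemma bump_lipschitz (n : ℕ) : LipschitzWith 1 (bump (F := F) n) := by
  have hsub : LipschitzWith 1 (fun x : F => (n:ℝ) + 1 - ‖x‖) := by
    apply LipschitzWith.of_dist_le_mul
    intro x y
    rw [Real.dist_eq, dist_eq_norm]
    have : ((n:ℝ) + 1 - ‖x‖) - ((n:ℝ) + 1 - ‖y‖) = ‖y‖ - ‖x‖ := by ring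
    rw [this, NNReal.coe_one, one_mul, abs_sub_comm]
    exact abs_norm_sub_norm_le x y
  exact (hsub.min_const 1).max_const 0

lemma bump_nonneg (n : ℕ) (x : F) : 0 ≤ bump n x := le_max_right _ _

lemma bump_le_one (n : ℕ) (x : F) : bump n x ≤ 1 :=
  max_le (min_le_right _ _) zero_le_one

lemma bump_abs_le (n : ℕ) (x : F) : |bump n x| ≤ 1 :=
  abs_le.2 ⟨by linarith [bump_nonneg n x], bump_le_one n x⟩

lemma bump_eq_one (n : ℕ) (x : F) (h : ‖x‖ ≤ n) : bump n x = 1 := by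
  unfold bump
  rw [min_eq_right (by linarith), max_eq_left zero_le_one]

lemma bump_eq_zero (n : ℕ) (x : F) (h : (n:ℝ) + 1 ≤ ‖x‖) : bump n x = 0 := by
  unfold bump
  rw [max_eq_right]
  exact le_trans (min_le_left _ _) (by linarith)

lemma bump_mono (x : F) : Monotone (fun n => bump n x) := by
  apply monotone_nat_of_le_succ
  intro n
  apply max_le_max _ le_rfl
  apply min_le_min _ le_rfl
  push_cast; linarith

lemma bump_grad_le (n : ℕ) (x : F) : ‖gradient (bump (F := F) n) x‖ ≤ 1 := by
  rw [norm_gradient_eq]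
  simpa using norm_fderiv_le_of_lipschitz ℝ (bump_lipschitz n) (x₀ := x)

/-! integrability helpers -/

lemma integrable_mul_exp_of_sq {α : Type*} [MeasurableSpace α] {μ : Measure α} {a v : α → ℝ}
    (ham : AEStronglyMeasurable a μ) (hv : AEStronglyMeasurable (fun x => Real.exp (v x)) μ)
    (ha0 : ∀ x, 0 ≤ a x)
    (h2 : Integrable (fun x => a x ^ 2 * Real.exp (v x)) μ)
    (h0 : Integrable (fun x => Real.exp (v x)) μ) :
    Integrable (fun x => a x * Real.exp (v x)) μ := by
  refine Integrable.mono' ((h2.add h0).div_const 2) (ham.mul hv) ?_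
  apply Filter.Eventually.of_forall
  intro x
  simp only [Pi.add_apply]
  rw [Real.norm_eq_abs, abs_of_nonneg (mul_nonneg (ha0 x) (Real.exp_pos _).le)]
  nlinarith [mul_nonneg (sq_nonneg (a x - 1)) (Real.exp_pos (v x)).le]

/-! Cauchy-Schwarz -/

lemma integral_CS {α : Type*} [MeasurableSpace α] (μ : Measure α) {f g : α → ℝ}
    (hfm : AEStronglyMeasurable f μ) (hgm : AEStronglyMeasurable g μ)
    (hf0 : ∀ x, 0 ≤ f x) (hg0 : ∀ x, 0 ≤ g x)
    (hf2 : Integrable (fun x => f x ^ 2) μ) (hg2 : Integrable (fun x => g x ^ 2) μ) :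
    ∫ x, f x * g x ∂μ ≤ Real.sqrt (∫ x, f x ^ 2 ∂μ) * Real.sqrt (∫ x, g x ^ 2 ∂μ) := by
  have hpq : Real.HolderConjugate 2 2 := Real.HolderConjugate.two_two
  have hfL : MemLp f (ENNReal.ofReal 2) μ := by
    rw [ENNReal.ofReal_ofNat]
    exact (memLp_two_iff_integrable_sq hfm).2 hf2
  have hgL : MemLp g (ENNReal.ofReal 2) μ := by
    rw [ENNReal.ofReal_ofNat]
    exact (memLp_two_iff_integrable_sq hgm).2 hg2
  have h2 : ∀ t : ℝ, t ^ (2:ℝ) = t ^ (2:ℕ) := fun t => by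
    rw [← Real.rpow_natCast t 2]; norm_num
  have := integral_mul_le_Lp_mul_Lq_of_nonneg hpq
    (Filter.Eventually.of_forall hf0) (Filter.Eventually.of_forall hg0) hfL hgL
  simp only [h2] at this
  calc ∫ x, f x * g x ∂μ
      ≤ (∫ a, f a ^ (2:ℕ) ∂μ) ^ (1 / 2 : ℝ) * (∫ a, g a ^ (2:ℕ) ∂μ) ^ (1 / 2 : ℝ) := this
    _ = Real.sqrt (∫ x, f x ^ 2 ∂μ) * Real.sqrt (∫ x, g x ^ 2 ∂μ) := by
        rw [← Real.sqrt_eq_rpow, ← Real.sqrt_eq_rpow]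

lemma integral_CS_exp {α : Type*} [MeasurableSpace α] (μ : Measure α) {u w v : α → ℝ}
    (hum : AEStronglyMeasurable u μ) (hwm : AEStronglyMeasurable w μ)
    (hvm : AEStronglyMeasurable (fun x => Real.exp (v x / 2)) μ)
    (hu0 : ∀ x, 0 ≤ u x) (hw0 : ∀ x, 0 ≤ w x)
    (hu2 : Integrable (fun x => u x ^ 2 * Real.exp (v x)) μ)
    (hw2 : Integrable (fun x => w x ^ 2 * Real.exp (v x)) μ) :
    ∫ x, u x * w x * Real.exp (v x) ∂μ ≤
      Real.sqrt (∫ x, u x ^ 2 * Real.exp (v x) ∂μ) *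
        Real.sqrt (∫ x, w x ^ 2 * Real.exp (v x) ∂μ) := by
  have e2 : ∀ t : ℝ, Real.exp (t / 2) * Real.exp (t / 2) = Real.exp t := fun t => by
    rw [← Real.exp_add, add_halves]
  have hx1 : ∀ x, u x * w x * Real.exp (v x) =
      (u x * Real.exp (v x / 2)) * (w x * Real.exp (v x / 2)) := fun x => by
    rw [← e2 (v x)]; ring
  have hsqu : ∀ x, (u x * Real.exp (v x / 2)) ^ 2 = u x ^ 2 * Real.exp (v x) := fun x => by
    rw [mul_pow, pow_two (Real.exp (v x / 2)), e2]
  have hsqw : ∀ x, (w x * Real.exp (v x / 2)) ^ 2 = w x ^ 2 * Real.exp (v x) := fun x => by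
    rw [mul_pow, pow_two (Real.exp (v x / 2)), e2]
  have h1 : ∫ x, u x * w x * Real.exp (v x) ∂μ =
      ∫ x, (u x * Real.exp (v x / 2)) * (w x * Real.exp (v x / 2)) ∂μ :=
    integral_congr_ae (Filter.Eventually.of_forall hx1)
  have h2 : ∫ x, u x ^ 2 * Real.exp (v x) ∂μ = ∫ x, (u x * Real.exp (v x / 2)) ^ 2 ∂μ :=
    integral_congr_ae (Filter.Eventually.of_forall fun x => (hsqu x).symm)
  have h3 : ∫ x, w x ^ 2 * Real.exp (v x) ∂μ = ∫ x, (w x * Real.exp (v x / 2)) ^ 2 ∂μ :=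
    integral_congr_ae (Filter.Eventually.of_forall fun x => (hsqw x).symm)
  rw [h1, h2, h3]
  exact integral_CS μ (hum.mul hvm) (hwm.mul hvm)
    (fun x => mul_nonneg (hu0 x) (Real.exp_pos _).le)
    (fun x => mul_nonneg (hw0 x) (Real.exp_pos _).le)
    (hu2.congr (Filter.Eventually.of_forall fun x => (hsqu x).symm))
    (hw2.congr (Filter.Eventually.of_forall fun x => (hsqw x).symm))

end AuxLemmas

section GeomLemmas

lemma continuous_LV (d : ℕ) {V h : EuclideanSpace ℝ (Fin (d + 1)) → ℝ}
    (hV : ContDiff ℝ 1 V) (hh : ContDiff ℝ 2 h) : Continuous (LV d V h) := by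
  have hlap : Continuous (lap d h) := by
    apply continuous_finset_sum
    intro i _
    have h1 : ContDiff ℝ 1 (fun z => fderiv ℝ h z (EuclideanSpace.single i 1)) := by
      have := hh.fderiv_right (m := 1) (by norm_num)
      exact this.clm_apply contDiff_const
    have h2 : Continuous
        (fun x => fderiv ℝ (fun z => fderiv ℝ h z (EuclideanSpace.single i 1)) x) :=
      h1.continuous_fderiv one_ne_zero
    exact (ContinuousLinearMap.apply ℝ ℝ (EuclideanSpace.single i 1)).continuous.comp h2
  exact hlap.add ((continuous_gradient hV).inner (continuous_gradient (hh.of_le one_le_two)))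

lemma continuous_iota (d : ℕ) : Continuous (iota d) := by
  have h1 : Continuous (fun y : Fin d → ℝ => (Fin.cons 0 y : Fin (d+1) → ℝ)) := by
    apply continuous_pi
    intro i
    refine Fin.cases ?_ ?_ i
    · simpa using continuous_const
    · intro j; simpa using continuous_apply j
  exact (PiLp.continuousLinearEquiv 2 ℝ _).symm.continuous.comp
    (h1.comp (PiLp.continuousLinearEquiv 2 ℝ _).continuous)

lemma norm_iota (d : ℕ) (y : EuclideanSpace ℝ (Fin d)) : ‖iota d y‖ = ‖y‖ := by
  rw [EuclideanSpace.norm_eq, EuclideanSpace.norm_eq]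
  congr 1
  rw [Fin.sum_univ_succ]
  simp [iota]

lemma continuous_eval0 (d : ℕ) : Continuous (fun x : EuclideanSpace ℝ (Fin (d+1)) => x 0) :=
  (EuclideanSpace.proj (0 : Fin (d+1))).continuous

lemma isOpen_Hs (d : ℕ) : IsOpen (Hs d) :=
  isOpen_lt continuous_const (continuous_eval0 d)

lemma Hs_nonempty (d : ℕ) : (Hs d).Nonempty := by
  refine ⟨EuclideanSpace.single 0 1, ?_⟩
  simp [Hs, EuclideanSpace.single_apply]

end GeomLemmas
section ExpIota

lemma integrable_exp_iota (d : ℕ) (V h : EuclideanSpace ℝ (Fin (d + 1)) → ℝ)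
    (hV : ContDiff ℝ 1 V) (hh : ContDiff ℝ 2 h)
    (hZV : IntegrableOn (fun x => Real.exp (V x)) (Hs d))
    (hL2a : IntegrableOn (fun x => (max (-(LV d V h x)) 0) ^ 2 * Real.exp (V x)) (Hs d))
    (hL2b : IntegrableOn (fun x => ‖gradient h x‖ ^ 2 * Real.exp (V x)) (Hs d))
    (hGG : ∀ φ : EuclideanSpace ℝ (Fin (d + 1)) → ℝ, (∃ K, LipschitzWith K φ) →
      (∃ C, ∀ x, |φ x| ≤ C) →
      (∫ y, φ (iota d y) * Real.exp (V (iota d y))) =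
        - ∫ x in Hs d,
            (φ x * LV d V h x + (inner ℝ (gradient φ x) (gradient h x) : ℝ)) * Real.exp (V x)) :
    Integrable (fun y => Real.exp (V (iota d y))) := by
  have hVc := hV.continuous
  have hexpc : Continuous (fun x : EuclideanSpace ℝ (Fin (d+1)) => Real.exp (V x)) :=
    Real.continuous_exp.comp hVc
  have hLVc := continuous_LV d hV hh
  have hgh := continuous_gradient (hh.of_le one_le_two)
  have hG1i : IntegrableOn (fun x => max (-(LV d V h x)) 0 * Real.exp (V x)) (Hs d) :=
    integrable_mul_exp_of_sq (hLVc.neg.max continuous_const).aestronglyMeasurable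
      hexpc.aestronglyMeasurable (fun x => le_max_right _ _) hL2a hZV
  have hG2i : IntegrableOn (fun x => ‖gradient h x‖ * Real.exp (V x)) (Hs d) :=
    integrable_mul_exp_of_sq hgh.norm.aestronglyMeasurable
      hexpc.aestronglyMeasurable (fun x => norm_nonneg _) hL2b hZV
  set B : ℝ := ∫ x in Hs d,
      (max (-(LV d V h x)) 0 * Real.exp (V x) + ‖gradient h x‖ * Real.exp (V x)) with hB
  have key : ∀ n : ℕ, (∫ y, bump n (iota d y) * Real.exp (V (iota d y))) ≤ B := by
    intro n
    have hbl := bump_lipschitz (F := EuclideanSpace ℝ (Fin (d+1))) n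
    have hbc : Continuous (bump (F := EuclideanSpace ℝ (Fin (d+1))) n) := hbl.continuous
    rw [hGG (bump n) ⟨1, hbl⟩ ⟨1, fun x => bump_abs_le n x⟩, ← integral_neg]
    have hIA : IntegrableOn (fun x => bump n x * LV d V h x * Real.exp (V x)) (Hs d) := by
      apply Integrable.integrableOn
      apply Continuous.integrable_of_hasCompactSupport ((hbc.mul hLVc).mul hexpc)
      apply HasCompactSupport.intro
        (isCompact_closedBall (0 : EuclideanSpace ℝ (Fin (d+1))) ((n:ℝ)+1))
      intro x hx
      have hn : (n:ℝ)+1 ≤ ‖x‖ := by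
        simp only [Metric.mem_closedBall, dist_zero_right, not_le] at hx
        exact hx.le
      simp [bump_eq_zero n x hn]
    have hIB : IntegrableOn
        (fun x => (inner ℝ (gradient (bump n) x) (gradient h x) : ℝ) * Real.exp (V x)) (Hs d) := by
      refine Integrable.mono' hG2i
        (((((measurable_gradient' (bump n)).aemeasurable).inner
          hgh.measurable.aemeasurable).aestronglyMeasurable).mul
          hexpc.aestronglyMeasurable) (Filter.Eventually.of_forall fun x => ?_)
      rw [Real.norm_eq_abs, abs_mul, abs_of_nonneg (Real.exp_pos _).le]
      have h1 : |(inner ℝ (gradient (bump n) x) (gradient h x) : ℝ)| ≤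
          ‖gradient (bump n) x‖ * ‖gradient h x‖ := abs_real_inner_le_norm _ _
      have h2 := bump_grad_le n x
      have h3 : |(inner ℝ (gradient (bump n) x) (gradient h x) : ℝ)| ≤ ‖gradient h x‖ := by
        nlinarith [norm_nonneg (gradient h x), norm_nonneg (gradient (bump n) x)]
      exact mul_le_mul_of_nonneg_right h3 (Real.exp_pos _).le
    have hsum : IntegrableOn
        (fun x => (bump n x * LV d V h x + (inner ℝ (gradient (bump n) x) (gradient h x) : ℝ)) *
          Real.exp (V x)) (Hs d) := by
      refine (hIA.add hIB).congr (Filter.Eventually.of_forall fun x => ?_)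
      simp only [Pi.add_apply]; ring
    refine le_trans (integral_mono hsum.neg (hG1i.add hG2i) ?_) ?_
    · intro x
      simp only [Pi.neg_apply, Pi.add_apply]
      have hb0 := bump_nonneg n x
      have hb1 := bump_le_one n x
      have hL1 : -(LV d V h x) ≤ max (-(LV d V h x)) 0 := le_max_left _ _
      have hL0 : (0:ℝ) ≤ max (-(LV d V h x)) 0 := le_max_right _ _
      have he := (Real.exp_pos (V x)).le
      have hba : -(bump n x * LV d V h x) ≤ max (-(LV d V h x)) 0 := by nlinarith
      have hi : -(inner ℝ (gradient (bump n) x) (gradient h x) : ℝ) ≤ ‖gradient h x‖ := by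
        have h1 := abs_real_inner_le_norm (gradient (bump n) x) (gradient h x)
        have h2 := bump_grad_le n x
        have h3 := neg_abs_le (inner ℝ (gradient (bump n) x) (gradient h x) : ℝ)
        nlinarith [norm_nonneg (gradient h x), norm_nonneg (gradient (bump n) x)]
      calc -((bump n x * LV d V h x + (inner ℝ (gradient (bump n) x) (gradient h x) : ℝ)) *
              Real.exp (V x))
          = (-(bump n x * LV d V h x) +
              -(inner ℝ (gradient (bump n) x) (gradient h x) : ℝ)) * Real.exp (V x) := by ring
        _ ≤ (max (-(LV d V h x)) 0 + ‖gradient h x‖) * Real.exp (V x) :=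
            mul_le_mul_of_nonneg_right (add_le_add hba hi) he
        _ = max (-(LV d V h x)) 0 * Real.exp (V x) + ‖gradient h x‖ * Real.exp (V x) := by ring
    · exact le_of_eq (by rw [hB]; rfl)
  have hcont_exp_iota : Continuous fun y => Real.exp (V (iota d y)) :=
    Real.continuous_exp.comp (hVc.comp (continuous_iota d))
  have hintn : ∀ n : ℕ, Integrable (fun y => bump n (iota d y) * Real.exp (V (iota d y))) := by
    intro n
    apply Continuous.integrable_of_hasCompactSupport
      (((bump_lipschitz n).continuous.comp (continuous_iota d)).mul hcont_exp_iota)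
    apply HasCompactSupport.intro (isCompact_closedBall (0 : EuclideanSpace ℝ (Fin d)) ((n:ℝ)+1))
    intro y hy
    have h1 : (n:ℝ)+1 ≤ ‖y‖ := by
      simp only [Metric.mem_closedBall, dist_zero_right, not_le] at hy
      exact hy.le
    have h2 : (n:ℝ)+1 ≤ ‖iota d y‖ := by rw [norm_iota]; exact h1
    simp [bump_eq_zero _ _ h2]
  have hsup : ∀ y, (⨆ n : ℕ, ENNReal.ofReal (bump n (iota d y) * Real.exp (V (iota d y)))) =
      ENNReal.ofReal (Real.exp (V (iota d y))) := by
    intro y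
    apply le_antisymm
    · refine iSup_le fun n => ENNReal.ofReal_le_ofReal ?_
      nlinarith [bump_le_one n (iota d y), bump_nonneg n (iota d y),
        (Real.exp_pos (V (iota d y))).le]
    · refine le_iSup_of_le ⌈‖iota d y‖⌉₊ (le_of_eq ?_)
      rw [bump_eq_one _ _ (Nat.le_ceil _), one_mul]
  have hlint : (∫⁻ y, ENNReal.ofReal (Real.exp (V (iota d y)))) ≤ ENNReal.ofReal B := by
    have hmeas : ∀ n : ℕ, Measurable fun y =>
        ENNReal.ofReal (bump n (iota d y) * Real.exp (V (iota d y))) := fun n =>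
      ((((bump_lipschitz n).continuous.comp (continuous_iota d)).mul
        hcont_exp_iota).measurable).ennreal_ofReal
    have hmono : Monotone fun n : ℕ =>
        (fun y => ENNReal.ofReal (bump n (iota d y) * Real.exp (V (iota d y)))) := by
      intro a b hab y
      exact ENNReal.ofReal_le_ofReal
        (mul_le_mul_of_nonneg_right (bump_mono _ hab) (Real.exp_pos _).le)
    calc (∫⁻ y, ENNReal.ofReal (Real.exp (V (iota d y))))
        = ∫⁻ y, ⨆ n : ℕ, ENNReal.ofReal (bump n (iota d y) * Real.exp (V (iota d y))) :=
          lintegral_congr fun y => (hsup y).symm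
      _ = ⨆ n : ℕ, ∫⁻ y, ENNReal.ofReal (bump n (iota d y) * Real.exp (V (iota d y))) :=
          lintegral_iSup hmeas hmono
      _ ≤ ENNReal.ofReal B := by
          refine iSup_le fun n => ?_
          rw [← ofReal_integral_eq_lintegral_ofReal (hintn n)
            (Filter.Eventually.of_forall fun y =>
              mul_nonneg (bump_nonneg _ _) (Real.exp_pos _).le)]
          exact ENNReal.ofReal_le_ofReal (key n)
  refine ⟨hcont_exp_iota.aestronglyMeasurable, ?_⟩
  rw [hasFiniteIntegral_iff_ofReal (Filter.Eventually.of_forall fun y => (Real.exp_pos _).le)]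
  exact lt_of_le_of_lt hlint ENNReal.ofReal_lt_top

end ExpIota
section KeyEstimate

lemma keyA (d : ℕ) (V : EuclideanSpace ℝ (Fin (d + 1)) → ℝ)
    (W : EuclideanSpace ℝ (Fin d) → ℝ) (h : EuclideanSpace ℝ (Fin (d + 1)) → ℝ)
    (hV : ContDiff ℝ 1 V) (hh : ContDiff ℝ 2 h)
    (hZV : IntegrableOn (fun x => Real.exp (V x)) (Hs d))
    (hZW : Integrable fun y => Real.exp (W y))
    (hL2a : IntegrableOn (fun x => (max (-(LV d V h x)) 0) ^ 2 * Real.exp (V x)) (Hs d))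
    (hL2b : IntegrableOn (fun x => ‖gradient h x‖ ^ 2 * Real.exp (V x)) (Hs d))
    (hGG : ∀ φ : EuclideanSpace ℝ (Fin (d + 1)) → ℝ, (∃ K, LipschitzWith K φ) →
      (∃ C, ∀ x, |φ x| ≤ C) →
      (∫ y, φ (iota d y) * Real.exp (V (iota d y))) =
        - ∫ x in Hs d,
            (φ x * LV d V h x + (inner ℝ (gradient φ x) (gradient h x) : ℝ)) * Real.exp (V x))
    (hIι : Integrable (fun y => Real.exp (V (iota d y))))
    (hM : ∀ y, W y ≤ M0 d V W + V (iota d y))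
    (ψ : EuclideanSpace ℝ (Fin (d + 1)) → ℝ) (hψd : Differentiable ℝ ψ)
    (K : NNReal) (hψl : LipschitzWith K ψ)
    (Cb : ℝ) (hCb : ∀ x, |ψ x| ≤ Cb) (Cg : ℝ) (hCg : ∀ x, ‖gradient ψ x‖ ≤ Cg) :
    (∫ y, ψ (iota d y) * Real.exp (W y)) ≤
      Real.exp (M0 d V W) *
        (Real.sqrt (∫ x in Hs d, ψ x ^ 2 * Real.exp (V x)) *
           Real.sqrt (∫ x in Hs d, (max (-(LV d V h x)) 0) ^ 2 * Real.exp (V x)) +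
         Real.sqrt (∫ x in Hs d, ‖gradient ψ x‖ ^ 2 * Real.exp (V x)) *
           Real.sqrt (∫ x in Hs d, ‖gradient h x‖ ^ 2 * Real.exp (V x))) := by
  have hψc : Continuous ψ := hψd.continuous
  have hCb0 : (0:ℝ) ≤ Cb := le_trans (abs_nonneg _) (hCb 0)
  have hVc := hV.continuous
  have hexpc : Continuous (fun x : EuclideanSpace ℝ (Fin (d+1)) => Real.exp (V x)) :=
    Real.continuous_exp.comp hVc
  have hexp2c : Continuous (fun x : EuclideanSpace ℝ (Fin (d+1)) => Real.exp (V x / 2)) :=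
    Real.continuous_exp.comp (hVc.div_const 2)
  have hLVc := continuous_LV d hV hh
  have hgh := continuous_gradient (hh.of_le one_le_two)
  set D : ℝ :=
      Real.sqrt (∫ x in Hs d, ψ x ^ 2 * Real.exp (V x)) *
        Real.sqrt (∫ x in Hs d, (max (-(LV d V h x)) 0) ^ 2 * Real.exp (V x)) +
      Real.sqrt (∫ x in Hs d, ‖gradient ψ x‖ ^ 2 * Real.exp (V x)) *
        Real.sqrt (∫ x in Hs d, ‖gradient h x‖ ^ 2 * Real.exp (V x)) with hD
  have hD0 : 0 ≤ D := by
    rw [hD]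
    have := Real.sqrt_nonneg (∫ x in Hs d, ψ x ^ 2 * Real.exp (V x))
    positivity
  have hψpl : LipschitzWith K (fun x => max (ψ x) 0) := hψl.max_const 0
  have hψpc : Continuous (fun x : EuclideanSpace ℝ (Fin (d+1)) => max (ψ x) 0) :=
    hψpl.continuous
  have hψpb : ∀ x, |max (ψ x) 0| ≤ Cb := fun x => by
    rw [abs_of_nonneg (le_max_right _ _)]
    exact max_le (le_trans (le_abs_self _) (hCb x)) hCb0
  -- square integrability of ψ and ∇ψ against e^V
  have hsq1 : IntegrableOn (fun x => ψ x ^ 2 * Real.exp (V x)) (Hs d) := by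
    refine Integrable.mono' (hZV.const_mul (Cb ^ 2))
      ((hψc.pow 2).aestronglyMeasurable.mul hexpc.aestronglyMeasurable)
      (Filter.Eventually.of_forall fun x => ?_)
    rw [Real.norm_eq_abs, abs_of_nonneg (mul_nonneg (sq_nonneg _) (Real.exp_pos _).le)]
    have : ψ x ^ 2 ≤ Cb ^ 2 := by
      rw [← sq_abs]
      exact pow_le_pow_left₀ (abs_nonneg _) (hCb x) 2
    exact mul_le_mul_of_nonneg_right this (Real.exp_pos _).le
  have hgmeas : AEStronglyMeasurable (fun x => ‖gradient ψ x‖)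
      (volume.restrict (Hs d)) := (measurable_gradient' ψ).norm.aestronglyMeasurable
  have hsq2 : IntegrableOn (fun x => ‖gradient ψ x‖ ^ 2 * Real.exp (V x)) (Hs d) := by
    have hCg0 : (0:ℝ) ≤ Cg := le_trans (norm_nonneg _) (hCg 0)
    refine Integrable.mono' (hZV.const_mul (Cg ^ 2))
      ((((measurable_gradient' ψ).norm.pow_const 2).aestronglyMeasurable).mul
        hexpc.aestronglyMeasurable)
      (Filter.Eventually.of_forall fun x => ?_)
    rw [Real.norm_eq_abs, abs_of_nonneg (mul_nonneg (sq_nonneg _) (Real.exp_pos _).le)]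
    have : ‖gradient ψ x‖ ^ 2 ≤ Cg ^ 2 := pow_le_pow_left₀ (norm_nonneg _) (hCg x) 2
    exact mul_le_mul_of_nonneg_right this (Real.exp_pos _).le
  -- step 1 : boundary integral against e^{V∘ι} of the positive part
  have step1 : (∫ y, max (ψ (iota d y)) 0 * Real.exp (V (iota d y))) ≤ D := by
    rw [hGG (fun x => max (ψ x) 0) ⟨K, hψpl⟩ ⟨Cb, hψpb⟩]
    by_cases hint : IntegrableOn
        (fun x => (max (ψ x) 0 * LV d V h x +
          (inner ℝ (gradient (fun x => max (ψ x) 0) x) (gradient h x) : ℝ)) * Real.exp (V x))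
        (Hs d)
    · have hRHS1 : IntegrableOn
          (fun x => |ψ x| * (max (-(LV d V h x)) 0 * Real.exp (V x))) (Hs d) := by
        have hG1i : IntegrableOn (fun x => max (-(LV d V h x)) 0 * Real.exp (V x)) (Hs d) :=
          integrable_mul_exp_of_sq (hLVc.neg.max continuous_const).aestronglyMeasurable
            hexpc.aestronglyMeasurable (fun x => le_max_right _ _) hL2a hZV
        refine Integrable.mono' (hG1i.const_mul Cb)
          (hψc.abs.aestronglyMeasurable.mul
            (((hLVc.neg.max continuous_const).mul hexpc).aestronglyMeasurable))
          (Filter.Eventually.of_forall fun x => ?_)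
        have h0 : (0:ℝ) ≤ max (-(LV d V h x)) 0 * Real.exp (V x) :=
          mul_nonneg (le_max_right _ _) (Real.exp_pos _).le
        rw [Real.norm_eq_abs, abs_of_nonneg (mul_nonneg (abs_nonneg _) h0)]
        exact mul_le_mul_of_nonneg_right (hCb x) h0
      have hRHS2 : IntegrableOn
          (fun x => ‖gradient ψ x‖ * (‖gradient h x‖ * Real.exp (V x))) (Hs d) := by
        have hG2i : IntegrableOn (fun x => ‖gradient h x‖ * Real.exp (V x)) (Hs d) :=
          integrable_mul_exp_of_sq hgh.norm.aestronglyMeasurable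
            hexpc.aestronglyMeasurable (fun x => norm_nonneg _) hL2b hZV
        refine Integrable.mono' (hG2i.const_mul Cg)
          (hgmeas.mul ((hgh.norm.mul hexpc).aestronglyMeasurable))
          (Filter.Eventually.of_forall fun x => ?_)
        have h0 : (0:ℝ) ≤ ‖gradient h x‖ * Real.exp (V x) :=
          mul_nonneg (norm_nonneg _) (Real.exp_pos _).le
        rw [Real.norm_eq_abs, abs_of_nonneg (mul_nonneg (norm_nonneg _) h0)]
        exact mul_le_mul_of_nonneg_right (hCg x) h0
      have hptw : ∀ x,
          -((max (ψ x) 0 * LV d V h x +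
            (inner ℝ (gradient (fun x => max (ψ x) 0) x) (gradient h x) : ℝ)) * Real.exp (V x)) ≤
          |ψ x| * (max (-(LV d V h x)) 0 * Real.exp (V x)) +
            ‖gradient ψ x‖ * (‖gradient h x‖ * Real.exp (V x)) := by
        intro x
        have hp0 : (0:ℝ) ≤ max (ψ x) 0 := le_max_right _ _
        have hpa : max (ψ x) 0 ≤ |ψ x| := max_le (le_abs_self _) (abs_nonneg _)
        have hL1 : -(LV d V h x) ≤ max (-(LV d V h x)) 0 := le_max_left _ _
        have hL0 : (0:ℝ) ≤ max (-(LV d V h x)) 0 := le_max_right _ _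
        have he := (Real.exp_pos (V x)).le
        have ha : -(max (ψ x) 0 * LV d V h x) ≤ |ψ x| * max (-(LV d V h x)) 0 := by
          calc -(max (ψ x) 0 * LV d V h x) = max (ψ x) 0 * (-(LV d V h x)) := by ring
            _ ≤ max (ψ x) 0 * max (-(LV d V h x)) 0 := mul_le_mul_of_nonneg_left hL1 hp0
            _ ≤ |ψ x| * max (-(LV d V h x)) 0 := mul_le_mul_of_nonneg_right hpa hL0
        have hb : -(inner ℝ (gradient (fun x => max (ψ x) 0) x) (gradient h x) : ℝ) ≤
            ‖gradient ψ x‖ * ‖gradient h x‖ := by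
          have h1 := abs_real_inner_le_norm (gradient (fun x => max (ψ x) 0) x) (gradient h x)
          have h2 := gradient_posPart_le ψ (fun x => hψd.differentiableAt) x
          have h3 := neg_abs_le (inner ℝ (gradient (fun x => max (ψ x) 0) x) (gradient h x) : ℝ)
          have h4 : ‖gradient (fun x => max (ψ x) 0) x‖ * ‖gradient h x‖ ≤
              ‖gradient ψ x‖ * ‖gradient h x‖ :=
            mul_le_mul_of_nonneg_right h2 (norm_nonneg _)
          linarith
        calc -((max (ψ x) 0 * LV d V h x +
              (inner ℝ (gradient (fun x => max (ψ x) 0) x) (gradient h x) : ℝ)) * Real.exp (V x))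
            = (-(max (ψ x) 0 * LV d V h x) +
              -(inner ℝ (gradient (fun x => max (ψ x) 0) x) (gradient h x) : ℝ)) *
                Real.exp (V x) := by ring
          _ ≤ (|ψ x| * max (-(LV d V h x)) 0 + ‖gradient ψ x‖ * ‖gradient h x‖) *
                Real.exp (V x) := mul_le_mul_of_nonneg_right (add_le_add ha hb) he
          _ = |ψ x| * (max (-(LV d V h x)) 0 * Real.exp (V x)) +
                ‖gradient ψ x‖ * (‖gradient h x‖ * Real.exp (V x)) := by ring
      have hCS1 : (∫ x in Hs d, |ψ x| * (max (-(LV d V h x)) 0 * Real.exp (V x))) ≤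
          Real.sqrt (∫ x in Hs d, ψ x ^ 2 * Real.exp (V x)) *
            Real.sqrt (∫ x in Hs d, (max (-(LV d V h x)) 0) ^ 2 * Real.exp (V x)) := by
        have habs : (∫ x in Hs d, ψ x ^ 2 * Real.exp (V x)) =
            ∫ x in Hs d, |ψ x| ^ 2 * Real.exp (V x) :=
          integral_congr_ae (Filter.Eventually.of_forall fun x => by simp [sq_abs])
        rw [habs]
        have := integral_CS_exp (volume.restrict (Hs d))
          (hψc.abs.aestronglyMeasurable)
          ((hLVc.neg.max continuous_const).aestronglyMeasurable)
          hexp2c.aestronglyMeasurable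
          (fun x => abs_nonneg _) (fun x => le_max_right _ _)
          (hsq1.congr (Filter.Eventually.of_forall fun x => by simp [sq_abs])) hL2a
        calc (∫ x in Hs d, |ψ x| * (max (-(LV d V h x)) 0 * Real.exp (V x)))
            = ∫ x in Hs d, |ψ x| * max (-(LV d V h x)) 0 * Real.exp (V x) :=
              integral_congr_ae (Filter.Eventually.of_forall fun x => by ring)
          _ ≤ _ := this
      have hCS2 : (∫ x in Hs d, ‖gradient ψ x‖ * (‖gradient h x‖ * Real.exp (V x))) ≤
          Real.sqrt (∫ x in Hs d, ‖gradient ψ x‖ ^ 2 * Real.exp (V x)) *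
            Real.sqrt (∫ x in Hs d, ‖gradient h x‖ ^ 2 * Real.exp (V x)) := by
        have := integral_CS_exp (volume.restrict (Hs d))
          hgmeas (hgh.norm.aestronglyMeasurable) hexp2c.aestronglyMeasurable
          (fun x => norm_nonneg _) (fun x => norm_nonneg _) hsq2 hL2b
        calc (∫ x in Hs d, ‖gradient ψ x‖ * (‖gradient h x‖ * Real.exp (V x)))
            = ∫ x in Hs d, ‖gradient ψ x‖ * ‖gradient h x‖ * Real.exp (V x) :=
              integral_congr_ae (Filter.Eventually.of_forall fun x => by ring)
          _ ≤ _ := this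
      calc - ∫ x in Hs d,
            (max (ψ x) 0 * LV d V h x +
              (inner ℝ (gradient (fun x => max (ψ x) 0) x) (gradient h x) : ℝ)) * Real.exp (V x)
          = ∫ x in Hs d, -((max (ψ x) 0 * LV d V h x +
              (inner ℝ (gradient (fun x => max (ψ x) 0) x) (gradient h x) : ℝ)) *
                Real.exp (V x)) := (integral_neg _).symm
        _ ≤ ∫ x in Hs d, (|ψ x| * (max (-(LV d V h x)) 0 * Real.exp (V x)) +
              ‖gradient ψ x‖ * (‖gradient h x‖ * Real.exp (V x))) :=
            integral_mono hint.neg (hRHS1.add hRHS2) hptw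
        _ = (∫ x in Hs d, |ψ x| * (max (-(LV d V h x)) 0 * Real.exp (V x))) +
              ∫ x in Hs d, ‖gradient ψ x‖ * (‖gradient h x‖ * Real.exp (V x)) :=
            integral_add hRHS1 hRHS2
        _ ≤ D := by rw [hD]; exact add_le_add hCS1 hCS2
    · rw [integral_undef hint, neg_zero]
      exact hD0
  -- step 2 : move to the W-measure
  have int1 : Integrable (fun y => ψ (iota d y) * Real.exp (W y)) :=
    hZW.bdd_mul ((hψc.comp (continuous_iota d)).aestronglyMeasurable)
      (c := Cb) (Filter.Eventually.of_forall fun y => by rw [Real.norm_eq_abs]; exact hCb _)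
  have int2 : Integrable (fun y => max (ψ (iota d y)) 0 * Real.exp (W y)) :=
    hZW.bdd_mul ((hψpc.comp (continuous_iota d)).aestronglyMeasurable)
      (c := Cb) (Filter.Eventually.of_forall fun y => by rw [Real.norm_eq_abs]; exact hψpb _)
  have int3 : Integrable (fun y => max (ψ (iota d y)) 0 * Real.exp (V (iota d y))) :=
    hIι.bdd_mul ((hψpc.comp (continuous_iota d)).aestronglyMeasurable)
      (c := Cb) (Filter.Eventually.of_forall fun y => by rw [Real.norm_eq_abs]; exact hψpb _)
  calc (∫ y, ψ (iota d y) * Real.exp (W y))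
      ≤ ∫ y, max (ψ (iota d y)) 0 * Real.exp (W y) :=
        integral_mono int1 int2 (fun y =>
          mul_le_mul_of_nonneg_right (le_max_left _ _) (Real.exp_pos _).le)
    _ ≤ ∫ y, Real.exp (M0 d V W) * (max (ψ (iota d y)) 0 * Real.exp (V (iota d y))) := by
        refine integral_mono int2 (int3.const_mul _) (fun y => ?_)
        have h1 : Real.exp (W y) ≤ Real.exp (M0 d V W) * Real.exp (V (iota d y)) := by
          rw [← Real.exp_add]
          exact Real.exp_le_exp.2 (hM y)
        have h2 : (0:ℝ) ≤ max (ψ (iota d y)) 0 := le_max_right _ _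
        calc max (ψ (iota d y)) 0 * Real.exp (W y)
            ≤ max (ψ (iota d y)) 0 * (Real.exp (M0 d V W) * Real.exp (V (iota d y))) :=
              mul_le_mul_of_nonneg_left h1 h2
          _ = Real.exp (M0 d V W) * (max (ψ (iota d y)) 0 * Real.exp (V (iota d y))) := by ring
    _ = Real.exp (M0 d V W) * ∫ y, max (ψ (iota d y)) 0 * Real.exp (V (iota d y)) :=
        integral_const_mul _ _
    _ ≤ Real.exp (M0 d V W) * D :=
        mul_le_mul_of_nonneg_left step1 (Real.exp_pos _).le

end KeyEstimate
/-- under Assumption (A), comparison of the interior and boundary means. -/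
theorem sticky_mean_comparison
    (d : ℕ) (hd : 1 ≤ d)
    (V : EuclideanSpace ℝ (Fin (d + 1)) → ℝ) (W : EuclideanSpace ℝ (Fin d) → ℝ)
    (hV : ContDiff ℝ 1 V) (hW : Continuous W)
    (hZV : IntegrableOn (fun x => Real.exp (V x)) (Hs d))
    (hZW : Integrable fun y => Real.exp (W y))
    (h : EuclideanSpace ℝ (Fin (d + 1)) → ℝ) (hA : AssumptionA d V W h) :
    ∀ f, IsTest d f →
      |muV d V f - nuW d W (fun y => f (iota d y))| ≤
        C0 d V W * C1 d V h * Real.sqrt (muV d V (fun x => (f x - muV d V f) ^ 2))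
          + C0 d V W * C2 d V h * Real.sqrt (gV d V f) := by
  obtain ⟨hh2, hbd1, hbdd, hIa, hIb, hGG⟩ := hA
  intro f hf
  obtain ⟨hf1, ⟨Cb, hCb⟩, ⟨Cg, hCg⟩⟩ := hf
  have hfd : Differentiable ℝ f := hf1.differentiable one_ne_zero
  have hIι := integrable_exp_iota d V h hV hh2 hZV hIa hIb hGG
  have hM : ∀ y, W y ≤ M0 d V W + V (iota d y) := by
    intro y
    have h2 : max (W y - V (iota d y)) 0 ≤ M0 d V W := le_ciSup hbdd y
    have h1 : W y - V (iota d y) ≤ max (W y - V (iota d y)) 0 := le_max_left _ _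
    linarith
  have hZVpos : 0 < ZV d V := by
    rw [ZV, setIntegral_pos_iff_support_of_nonneg_ae
      (Filter.Eventually.of_forall fun x => (Real.exp_pos _).le) hZV]
    have hsupp : (Function.support fun x : EuclideanSpace ℝ (Fin (d+1)) => Real.exp (V x)) =
        Set.univ := by
      ext x; simp [Function.support, Real.exp_ne_zero]
    rw [hsupp, Set.univ_inter]
    exact (isOpen_Hs d).measure_pos _ (Hs_nonempty d)
  have hZWpos : 0 < ZW d W := by
    rw [ZW, integral_pos_iff_support_of_nonneg_ae
      (Filter.Eventually.of_forall fun x => (Real.exp_pos _).le) hZW]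
    have hsupp : (Function.support fun y : EuclideanSpace ℝ (Fin d) => Real.exp (W y)) =
        Set.univ := by
      ext x; simp [Function.support, Real.exp_ne_zero]
    rw [hsupp]
    exact isOpen_univ.measure_pos _ ⟨0, trivial⟩
  set m : ℝ := muV d V f with hm
  have hφd : Differentiable ℝ (fun x => f x - m) := hfd.sub_const m
  have hφg : ∀ x, ‖gradient (fun x => f x - m) x‖ ≤ Cg := fun x => by
    rw [gradient_sub_const f m x]; exact hCg x
  have hφb : ∀ x, |f x - m| ≤ Cb + |m| := fun x => by
    rw [sub_eq_add_neg]
    exact le_trans (abs_add_le _ _) (by rw [abs_neg]; exact add_le_add_left (hCb x) _)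
  have hφl : LipschitzWith (Real.toNNReal Cg) (fun x => f x - m) := by
    apply lipschitzWith_of_nnnorm_fderiv_le hφd
    intro x
    have h1 : ‖fderiv ℝ (fun x => f x - m) x‖ ≤ Cg := by
      rw [← norm_gradient_eq]; exact hφg x
    rw [← NNReal.coe_le_coe, coe_nnnorm, Real.coe_toNNReal']
    exact le_trans h1 (le_max_left _ _)
  have hφgn : ∀ x, ‖gradient (fun x => -(f x - m)) x‖ ≤ Cg := fun x => by
    rw [gradient_neg' (fun x => f x - m) x, norm_neg]; exact hφg x
  have hφdn : Differentiable ℝ (fun x => -(f x - m)) := hφd.neg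
  have hφln : LipschitzWith (Real.toNNReal Cg) (fun x => -(f x - m)) := by
    apply lipschitzWith_of_nnnorm_fderiv_le hφdn
    intro x
    have h1 : ‖fderiv ℝ (fun x => -(f x - m)) x‖ ≤ Cg := by
      rw [← norm_gradient_eq]; exact hφgn x
    rw [← NNReal.coe_le_coe, coe_nnnorm, Real.coe_toNNReal']
    exact le_trans h1 (le_max_left _ _)
  have hφbn : ∀ x, |-(f x - m)| ≤ Cb + |m| := fun x => by rw [abs_neg]; exact hφb x
  have K1 := keyA d V W h hV hh2 hZV hZW hIa hIb hGG hIι hM (fun x => f x - m) hφd _ hφl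
    (Cb + |m|) hφb Cg hφg
  have K2 := keyA d V W h hV hh2 hZV hZW hIa hIb hGG hIι hM (fun x => -(f x - m)) hφdn _ hφln
    (Cb + |m|) hφbn Cg hφgn
  beta_reduce at K1 K2
  have e1 : (∫ x in Hs d, (-(f x - m)) ^ 2 * Real.exp (V x)) =
      ∫ x in Hs d, (f x - m) ^ 2 * Real.exp (V x) :=
    integral_congr_ae (Filter.Eventually.of_forall fun x => by beta_reduce; rw [neg_sq])
  have e2 : (∫ x in Hs d, ‖gradient (fun x => -(f x - m)) x‖ ^ 2 * Real.exp (V x)) =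
      ∫ x in Hs d, ‖gradient f x‖ ^ 2 * Real.exp (V x) :=
    integral_congr_ae (Filter.Eventually.of_forall fun x => by
      beta_reduce
      rw [gradient_neg' (fun x => f x - m) x, norm_neg, gradient_sub_const f m x])
  have e3 : (∫ x in Hs d, ‖gradient (fun x => f x - m) x‖ ^ 2 * Real.exp (V x)) =
      ∫ x in Hs d, ‖gradient f x‖ ^ 2 * Real.exp (V x) :=
    integral_congr_ae (Filter.Eventually.of_forall fun x => by
      beta_reduce
      rw [gradient_sub_const f m x])
  rw [e1, e2] at K2
  rw [e3] at K1
  have cnv : ∀ ψ : EuclideanSpace ℝ (Fin (d+1)) → ℝ,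
      (∫ x in Hs d, ψ x * Real.exp (V x)) = ZV d V * muV d V ψ := by
    intro ψ; rw [muV, ← mul_assoc, mul_inv_cancel₀ hZVpos.ne', one_mul]
  have s1eq : Real.sqrt (∫ x in Hs d, (f x - m) ^ 2 * Real.exp (V x)) =
      Real.sqrt (ZV d V) * Real.sqrt (muV d V (fun x => (f x - m) ^ 2)) := by
    rw [show (∫ x in Hs d, (f x - m) ^ 2 * Real.exp (V x)) =
      ZV d V * muV d V (fun x => (f x - m) ^ 2) from cnv _, Real.sqrt_mul hZVpos.le]
  have s2eq : Real.sqrt (∫ x in Hs d, (max (-(LV d V h x)) 0) ^ 2 * Real.exp (V x)) =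
      Real.sqrt (ZV d V) * C1 d V h := by
    rw [show (∫ x in Hs d, (max (-(LV d V h x)) 0) ^ 2 * Real.exp (V x)) =
      ZV d V * muV d V (fun x => (max (-(LV d V h x)) 0) ^ 2) from cnv _,
      Real.sqrt_mul hZVpos.le, C1]
  have s3eq : Real.sqrt (∫ x in Hs d, ‖gradient f x‖ ^ 2 * Real.exp (V x)) =
      Real.sqrt (ZV d V) * Real.sqrt (gV d V f) := by
    rw [show (∫ x in Hs d, ‖gradient f x‖ ^ 2 * Real.exp (V x)) =
      ZV d V * muV d V (fun x => ‖gradient f x‖ ^ 2) from cnv _,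
      Real.sqrt_mul hZVpos.le, gV]
  have s4eq : Real.sqrt (∫ x in Hs d, ‖gradient h x‖ ^ 2 * Real.exp (V x)) =
      Real.sqrt (ZV d V) * C2 d V h := by
    rw [show (∫ x in Hs d, ‖gradient h x‖ ^ 2 * Real.exp (V x)) =
      ZV d V * muV d V (fun x => ‖gradient h x‖ ^ 2) from cnv _,
      Real.sqrt_mul hZVpos.le, C2]
  rw [s1eq, s2eq, s3eq, s4eq] at K1 K2
  have hintf : Integrable (fun y => f (iota d y) * Real.exp (W y)) :=
    hZW.bdd_mul ((hfd.continuous.comp (continuous_iota d)).aestronglyMeasurable)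
      (c := Cb) (Filter.Eventually.of_forall fun y => by rw [Real.norm_eq_abs]; exact hCb _)
  have hLHS1 : (∫ y, (f (iota d y) - m) * Real.exp (W y)) =
      ZW d W * (nuW d W (fun y => f (iota d y)) - m) := by
    have h1 : (∫ y, (f (iota d y) - m) * Real.exp (W y)) =
        (∫ y, f (iota d y) * Real.exp (W y)) - ∫ y, m * Real.exp (W y) := by
      calc (∫ y, (f (iota d y) - m) * Real.exp (W y))
          = ∫ y, (f (iota d y) * Real.exp (W y) - m * Real.exp (W y)) :=
            integral_congr_ae (Filter.Eventually.of_forall fun y => by ring)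
        _ = (∫ y, f (iota d y) * Real.exp (W y)) - ∫ y, m * Real.exp (W y) :=
            integral_sub hintf (hZW.const_mul m)
    have h2 : (∫ y, m * Real.exp (W y)) = m * ZW d W := integral_const_mul m _
    have h3 : (∫ y, f (iota d y) * Real.exp (W y)) =
        ZW d W * nuW d W (fun y => f (iota d y)) := by
      rw [nuW, ← mul_assoc, mul_inv_cancel₀ hZWpos.ne', one_mul]
    rw [h1, h2, h3]; ring
  have hLHS2 : (∫ y, -(f (iota d y) - m) * Real.exp (W y)) =
      -(ZW d W * (nuW d W (fun y => f (iota d y)) - m)) := by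
    rw [← hLHS1, ← integral_neg]
    exact integral_congr_ae (Filter.Eventually.of_forall fun y => by ring)
  rw [hLHS1] at K1
  rw [hLHS2] at K2
  set N := nuW d W (fun y => f (iota d y)) with hN
  set s1 := Real.sqrt (muV d V (fun x => (f x - m) ^ 2)) with hs1
  set s2 := Real.sqrt (gV d V f) with hs2
  have hsq : Real.sqrt (ZV d V) * Real.sqrt (ZV d V) = ZV d V := Real.mul_self_sqrt hZVpos.le
  have hR : Real.exp (M0 d V W) * ((Real.sqrt (ZV d V) * s1) * (Real.sqrt (ZV d V) * C1 d V h)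
      + (Real.sqrt (ZV d V) * s2) * (Real.sqrt (ZV d V) * C2 d V h)) =
      ZV d V * Real.exp (M0 d V W) * (C1 d V h * s1 + C2 d V h * s2) := by
    calc Real.exp (M0 d V W) * ((Real.sqrt (ZV d V) * s1) * (Real.sqrt (ZV d V) * C1 d V h)
        + (Real.sqrt (ZV d V) * s2) * (Real.sqrt (ZV d V) * C2 d V h))
        = (Real.sqrt (ZV d V) * Real.sqrt (ZV d V)) * Real.exp (M0 d V W) *
            (C1 d V h * s1 + C2 d V h * s2) := by ring
      _ = ZV d V * Real.exp (M0 d V W) * (C1 d V h * s1 + C2 d V h * s2) := by rw [hsq]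
  rw [hR] at K1 K2
  have hfinal : |N - m| * ZW d W ≤
      ZV d V * Real.exp (M0 d V W) * (C1 d V h * s1 + C2 d V h * s2) := by
    rcases le_or_gt 0 (N - m) with hc | hc
    · rw [abs_of_nonneg hc]; nlinarith [K1]
    · rw [abs_of_neg hc]; nlinarith [K2]
  have habs : |m - N| ≤
      (ZV d V * Real.exp (M0 d V W) * (C1 d V h * s1 + C2 d V h * s2)) / ZW d W := by
    rw [abs_sub_comm, le_div_iff₀ hZWpos]
    exact hfinal
  refine le_trans habs (le_of_eq ?_)
  rw [C0]
  field_simp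

end
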